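/- Let X be a countable data domain, A : X^n → Y an (ε,δ)-differentially private algorithm, and X = (X₁,…,X_n) ~ P^n for a distribution P over X. Then for each i ∈ {1,…,n} and each prefix x₁^{i−1} = (x₁,…,x_{i−1}) ∈ X^{i−1} with positive probability, the joint distribution of (A(X), X_i) conditioned on X₁^{i−1} = x₁^{i−1} is (ε,δ)-indistinguishable from the product of the conditional distribution of A(X) given X₁^{i−1} = x₁^{i−1} and the (unconditional) marginal distribution of X_i. -/

import Mathlib

open scoped ENNReal

/-- The probability that a sample from the probability mass function `μ` lands in `S`. -/
noncomputable def prob {α : Type*} (μ : PMF α) (S : Set α) : ℝ :=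
  (μ.toOuterMeasure S).toReal

/-- The independent coupling of two distributions: a pair whose components are independent
with the given marginal distributions. -/
noncomputable def indepPair {α β : Type*} (p : PMF α) (q : PMF β) : PMF (α × β) :=
  p.bind fun a => q.map fun b => (a, b)

/-- `MaxInfoLe μ b k` : the `b`-approximate max-information of the joint distribution `μ`
is at most `k` (measured in bits):  for every event `O` with `Pr[(X,Z) ∈ O] > b`,
`Pr[(X,Z) ∈ O] - b ≤ 2^k · Pr[X ⊗ Z ∈ O]`. -/
def MaxInfoLe {α β : Type*} (μ : PMF (α × β)) (b k : ℝ) : Prop :=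
  ∀ O : Set (α × β), b < prob μ O →
    prob μ O - b ≤ 2 ^ k * prob (indepPair (μ.map Prod.fst) (μ.map Prod.snd)) O

/-- The `n`-fold product (i.i.d.) distribution `P^n` on datasets of size `n`. -/
noncomputable def iidPMF {X : Type*} (P : PMF X) : (n : ℕ) → PMF (Fin n → X)
  | 0 => PMF.pure (fun i => i.elim0)
  | n + 1 => P.bind fun a => (iidPMF P n).map fun x => Fin.cons a x

/-- The joint distribution of `(X, A(X))` where `X ∼ μ` and `A` is a randomized algorithm. -/
noncomputable def jointPMF {D Y : Type*} (μ : PMF D) (A : D → PMF Y) : PMF (D × Y) :=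
  μ.bind fun x => (A x).map fun y => (x, y)
/-- Two datasets are neighboring if they differ in at most one entry. -/
def Neighbor {X : Type*} {n : ℕ} (x x' : Fin n → X) : Prop :=
  ∃ i : Fin n, ∀ j : Fin n, j ≠ i → x j = x' j

/-- `(ε,δ)`-differential privacy of a randomized algorithm `A` on datasets of size `n`. -/
def DiffPrivate {X Y : Type*} {n : ℕ} (A : (Fin n → X) → PMF Y) (ε δ : ℝ) : Prop :=
  ∀ x x' : Fin n → X, Neighbor x x' → ∀ O : Set Y,
    prob (A x) O ≤ Real.exp ε * prob (A x') O + δ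

/-- `PrefixEq i w x` : the dataset `x` agrees with `w` on all coordinates before `i`
(i.e. `x` has prefix `x₁^{i-1} = w₁^{i-1}`). -/
def PrefixEq {X : Type*} {n : ℕ} (i : Fin n) (w x : Fin n → X) : Prop :=
  ∀ j : Fin n, (j : ℕ) < (i : ℕ) → x j = w j

/-- The conditional probability `Pr[X_i ∈ O | A(X) = a, X₁^{i-1} = w₁^{i-1}]`, computed from the
joint distribution `μ` of the pair `(X, A(X))`. -/
noncomputable def condXi {X Y : Type*} {n : ℕ} (μ : PMF ((Fin n → X) × Y)) (i : Fin n)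
    (a : Y) (w : Fin n → X) (O : Set X) : ℝ :=
  prob μ {p | p.2 = a ∧ PrefixEq i w p.1 ∧ p.1 i ∈ O} /
    prob μ {p | p.2 = a ∧ PrefixEq i w p.1}

/-- `(ε,δ)`-indistinguishability of two distributions presented as set functions. -/
def IndistFn {D : Type*} (F G : Set D → ℝ) (ε δ : ℝ) : Prop :=
  ∀ O : Set D, F O ≤ Real.exp ε * G O + δ ∧ G O ≤ Real.exp ε * F O + δ

/-- The set `E_i(δ̂)` of "good" output/prefix pairs `(a, x₁^{i-1})`: those for which the marginal
distribution of `X_i` is `(3ε, δ̂)`-indistinguishable from the conditional distribution of `X_i`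
given `A(X) = a` and `X₁^{i-1} = x₁^{i-1}`. -/
def Eset {X Y : Type*} {n : ℕ} (μ : PMF ((Fin n → X) × Y)) (P : PMF X) (i : Fin n)
    (ε δhat : ℝ) : Set (Y × (Fin n → X)) :=
  {q | IndistFn (fun O => prob P O) (fun O => condXi μ i q.1 q.2 O) (3 * ε) δhat}

/-- The set `F_i` of output/prefix pairs `(a, x₁^i)` for which the likelihood ratio
`Pr[X_i = x_i | a, x₁^{i-1}] / Pr[X_i = x_i]` lies in `[e^{-6ε}, e^{6ε}]`. -/
def Fset {X Y : Type*} {n : ℕ} (μ : PMF ((Fin n → X) × Y)) (P : PMF X) (i : Fin n)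
    (ε : ℝ) : Set (Y × (Fin n → X)) :=
  {q | Real.exp (-(6 * ε)) ≤ condXi μ i q.1 q.2 {q.2 i} / (P (q.2 i)).toReal ∧
       condXi μ i q.1 q.2 {q.2 i} / (P (q.2 i)).toReal ≤ Real.exp (6 * ε)}

/-- `Z_i(a, x₁^i) = log₂( Pr[X_i = x_i | a, x₁^{i-1}] / Pr[X_i = x_i] )`. -/
noncomputable def Zi {X Y : Type*} {n : ℕ} (μ : PMF ((Fin n → X) × Y)) (P : PMF X)
    (i : Fin n) (q : Y × (Fin n → X)) : ℝ :=
  Real.logb 2 (condXi μ i q.1 q.2 {q.2 i} / (P (q.2 i)).toReal)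

/-- The set `G_i(δ̂)` of "good" tuples: `(a, x₁^{i-1}) ∈ E_i(δ̂)` and `(a, x₁^i) ∈ F_i`. -/
def Gset {X Y : Type*} {n : ℕ} (μ : PMF ((Fin n → X) × Y)) (P : PMF X) (i : Fin n)
    (ε δhat : ℝ) : Set (Y × (Fin n → X)) :=
  {q | q ∈ Eset μ P i ε δhat ∧ q ∈ Fset μ P i ε}

/-- `G_{≤ i}(δ̂)` : membership in `G_j(δ̂)` for every `j ≤ i`. -/
def GleSet {X Y : Type*} {n : ℕ} (μ : PMF ((Fin n → X) × Y)) (P : PMF X) (i : Fin n)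
    (ε δhat : ℝ) : Set (Y × (Fin n → X)) :=
  {q | ∀ j : Fin n, j ≤ i → q ∈ Gset μ P j ε δhat}

/-- `T_i(a, x₁^i)` equals `Z_i(a, x₁^i)` on the good set `G_{≤ i}(δ̂)` and `0` otherwise. -/
noncomputable def Ti {X Y : Type*} {n : ℕ} (μ : PMF ((Fin n → X) × Y)) (P : PMF X)
    (i : Fin n) (ε δhat : ℝ) : (Y × (Fin n → X)) → ℝ :=
  (GleSet μ P i ε δhat).indicator (Zi μ P i)


section Aux

open Classical

private lemma jointPMF_apply' {D Y : Type*} (μ0 : PMF D) (A : D → PMF Y) (d : D) (y : Y) :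
    jointPMF μ0 A (d, y) = μ0 d * A d y := by
  classical
  simp only [jointPMF, PMF.bind_apply, PMF.map_apply]
  rw [tsum_eq_single d]
  · congr 1
    rw [tsum_eq_single y]
    · simp
    · intro b hb
      rw [if_neg]
      simp [Prod.ext_iff]
      exact fun h => absurd h.symm hb
  · intro x hx
    have h0 : ∀ b : Y, (if (d, y) = (x, b) then A x b else 0) = 0 := by
      intro b
      rw [if_neg]
      simp only [Prod.mk.injEq, not_and]
      exact fun h => absurd h.symm hx
    simp [h0]
    exact Or.inr fun h => absurd h.symm hx

private lemma joint_om {D Y : Type*} (μ0 : PMF D) (A : D → PMF Y) (T : Set (D × Y)) :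
    (jointPMF μ0 A).toOuterMeasure T
      = ∑' x, μ0 x * (A x).toOuterMeasure {y | (x, y) ∈ T} := by
  rw [PMF.toOuterMeasure_apply, ENNReal.tsum_prod']
  refine tsum_congr fun x => ?_
  rw [PMF.toOuterMeasure_apply, ← ENNReal.tsum_mul_left]
  refine tsum_congr fun y => ?_
  by_cases h : (x, y) ∈ T <;>
    simp [Set.indicator_apply, h, jointPMF_apply']

private lemma iid_apply' {X : Type*} (P : PMF X) : ∀ (n : ℕ) (x : Fin n → X),
    iidPMF P n x = ∏ j, P (x j) := by
  intro n
  induction n with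
  | zero =>
    intro x
    have hx : x = fun i => i.elim0 := funext fun i => i.elim0
    simp [iidPMF, hx, PMF.pure_apply]
  | succ n ih =>
    intro x
    have hx : x = Fin.cons (x 0) (Fin.tail x) := (Fin.cons_self_tail x).symm
    simp only [iidPMF, PMF.bind_apply, PMF.map_apply]
    rw [tsum_eq_single (x 0)]
    · rw [tsum_eq_single (Fin.tail x)]
      · rw [if_pos hx, ih, Fin.prod_univ_succ]
        rfl
      · intro t ht
        rw [if_neg]
        intro h
        exact ht (by rw [h]; simp [Fin.tail])
    · intro a ha
      have h0 : ∀ t, (if x = Fin.cons a t then iidPMF P n t else 0) = 0 := by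
        intro t
        rw [if_neg]
        intro h
        exact ha (by rw [h]; simp)
      simp [h0]
      exact Or.inr fun t ht => by
        exact absurd (by rw [ht]; simp) ha

private lemma iid_update {X : Type*} (P : PMF X) {n : ℕ} (i : Fin n) (x : Fin n → X) (z : X) :
    iidPMF P n x * P z = iidPMF P n (Function.update x i z) * P (x i) := by
  rw [iid_apply', iid_apply']
  rw [← Finset.mul_prod_erase Finset.univ (fun j => P (x j)) (Finset.mem_univ i),
      ← Finset.mul_prod_erase Finset.univ (fun j => P (Function.update x i z j))
        (Finset.mem_univ i)]
  have hprod : ∏ j ∈ Finset.univ.erase i, P (Function.update x i z j)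
      = ∏ j ∈ Finset.univ.erase i, P (x j) := by
    refine Finset.prod_congr rfl fun j hj => ?_
    rw [Function.update_of_ne (Finset.mem_erase.1 hj).1]
  rw [hprod, Function.update_self]
  ring

private lemma om_le_one {α : Type*} (p : PMF α) (T : Set α) : p.toOuterMeasure T ≤ 1 := by
  rw [PMF.toOuterMeasure_apply]
  calc ∑' x, T.indicator p x ≤ ∑' x, p x :=
        ENNReal.tsum_le_tsum fun x => Set.indicator_le_self T p x
    _ = 1 := p.tsum_coe

private lemma om_ne_top {α : Type*} (p : PMF α) (T : Set α) : p.toOuterMeasure T ≠ ⊤ :=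
  ne_top_of_le_ne_top ENNReal.one_ne_top (om_le_one p T)

private lemma prefix_update {X : Type*} {n : ℕ} (i : Fin n) (w x : Fin n → X) (z : X) :
    PrefixEq i w (Function.update x i z) ↔ PrefixEq i w x := by
  constructor <;> intro h j hj <;> have hji : j ≠ i := fun h' => by omega
  · have := h j hj
    rwa [Function.update_of_ne hji] at this
  · rw [Function.update_of_ne hji]
    exact h j hj

end Aux

set_option maxHeartbeats 2000000

/-- **Claim 3.3.**  If `A` is `(ε,δ)`-differentially private and `X ∼ P^n`, then
for each `i` and each prefix `w₁^{i-1}` of positive probability, the joint distribution of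
`(A(X), X_i)` conditioned on `X₁^{i-1} = w₁^{i-1}` is `(ε,δ)`-indistinguishable from the product
of the conditional distribution of `A(X)` given `X₁^{i-1} = w₁^{i-1}` with the (unconditional)
marginal distribution of `X_i` (which is `P`). -/
theorem stmt_6 {X Y : Type*} [Countable X] {n : ℕ} (A : (Fin n → X) → PMF Y)
    (ε δ : ℝ) (hA : DiffPrivate A ε δ) (P : PMF X) (i : Fin n) (w : Fin n → X)
    (hw : 0 < prob (jointPMF (iidPMF P n) A) {p | PrefixEq i w p.1}) :
    IndistFn
      (fun O : Set (Y × X) =>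
        prob (jointPMF (iidPMF P n) A) {p | PrefixEq i w p.1 ∧ (p.2, p.1 i) ∈ O} /
          prob (jointPMF (iidPMF P n) A) {p | PrefixEq i w p.1})
      (fun O : Set (Y × X) =>
        ∑' q : Y × X,
          Set.indicator O
            (fun q =>
              (prob (jointPMF (iidPMF P n) A) {p | p.2 = q.1 ∧ PrefixEq i w p.1} /
                  prob (jointPMF (iidPMF P n) A) {p | PrefixEq i w p.1}) * (P q.2).toReal)
            q)
      ε δ := by
  classical
  set μ0 : PMF (Fin n → X) := iidPMF P n with hμ0
  set μ : PMF ((Fin n → X) × Y) := jointPMF μ0 A with hμ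
  -- nonnegativity of δ
  obtain ⟨x0, -⟩ := P.support_nonempty
  have hδ0 : 0 ≤ δ := by
    have h := hA (fun _ => x0) (fun _ => x0) ⟨i, fun _ _ => rfl⟩ ∅
    have hz : prob (A fun _ => x0) (∅ : Set Y) = 0 := by
      simp [prob, PMF.toOuterMeasure_apply]
    rw [hz] at h
    simpa using h
  -- basic quantities
  set sE : ℝ≥0∞ := μ.toOuterMeasure {p | PrefixEq i w p.1} with hsE
  set s : ℝ := sE.toReal with hs
  have hspos : 0 < s := hw
  have hsne : s ≠ 0 := ne_of_gt hspos
  set Φ : (Fin n → X) → ℝ≥0∞ := fun x => if PrefixEq i w x then μ0 x else 0 with hΦ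
  set Eε : ℝ≥0∞ := ENNReal.ofReal (Real.exp ε) with hEε
  set Dδ : ℝ≥0∞ := ENNReal.ofReal δ with hDδ
  set mA : (Fin n → X) → Set Y → ℝ≥0∞ := fun x T => (A x).toOuterMeasure T with hmA
  -- weighted sum operator
  set S : ((Fin n → X) → X → ℝ≥0∞) → ℝ≥0∞ :=
    fun F => ∑' p : (Fin n → X) × X, Φ p.1 * P p.2 * F p.1 p.2 with hS
  have hS_mono : ∀ F G : (Fin n → X) → X → ℝ≥0∞, (∀ x z, F x z ≤ G x z) → S F ≤ S G := by
    intro F G h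
    exact ENNReal.tsum_le_tsum fun p => mul_le_mul_right (h p.1 p.2) _
  have hS_one : S (fun _ _ => 1) = sE := by
    rw [hS]
    simp only [mul_one]
    rw [ENNReal.tsum_prod']
    have : ∀ x : Fin n → X, ∑' z : X, Φ x * P z = Φ x := by
      intro x
      rw [ENNReal.tsum_mul_left, P.tsum_coe, mul_one]
    rw [tsum_congr this, hsE, joint_om]
    refine tsum_congr fun x => ?_
    by_cases h : PrefixEq i w x
    · have hset : {y : Y | (x, y) ∈ {p : (Fin n → X) × Y | PrefixEq i w p.1}} = Set.univ := by
        ext y; simp [h]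
      rw [hset]
      simp only [hΦ]
      rw [(PMF.toOuterMeasure_apply_eq_one_iff (A x) Set.univ).2 (Set.subset_univ _), mul_one]
      exact if_pos h
    · have hset : {y : Y | (x, y) ∈ {p : (Fin n → X) × Y | PrefixEq i w p.1}} = ∅ := by
        ext y; simp [h]
      simp [hset, hΦ, h]
  have hS_lin : ∀ F : (Fin n → X) → X → ℝ≥0∞,
      S (fun x z => Eε * F x z + Dδ) = Eε * S F + Dδ * sE := by
    intro F
    rw [← hS_one, hS]
    rw [← ENNReal.tsum_mul_left, ← ENNReal.tsum_mul_left, ← ENNReal.tsum_add]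
    refine tsum_congr fun p => ?_
    ring
  -- representation of fE
  have h_fE : ∀ O : Set (Y × X),
      μ.toOuterMeasure {p | PrefixEq i w p.1 ∧ (p.2, p.1 i) ∈ O}
        = S (fun x _ => mA x {y | (y, x i) ∈ O}) := by
    intro O
    simp only [hS]
    rw [ENNReal.tsum_prod']
    have hz : ∀ x : Fin n → X,
        ∑' z : X, Φ x * P z * mA x {y | (y, x i) ∈ O} = Φ x * mA x {y | (y, x i) ∈ O} := by
      intro x
      have : ∀ z : X, Φ x * P z * mA x {y | (y, x i) ∈ O}
          = (Φ x * mA x {y | (y, x i) ∈ O}) * P z := fun z => by ring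
      rw [tsum_congr this, ENNReal.tsum_mul_left, P.tsum_coe, mul_one]
    rw [tsum_congr hz, hμ, joint_om]
    refine tsum_congr fun x => ?_
    by_cases h : PrefixEq i w x
    · have hset : {y : Y | (x, y) ∈ {p : (Fin n → X) × Y | PrefixEq i w p.1 ∧ (p.2, p.1 i) ∈ O}}
          = {y | (y, x i) ∈ O} := by
        ext y; simp [h]
      rw [hset]
      simp only [hΦ, hmA]
      rw [if_pos h]
    · have hset : {y : Y | (x, y) ∈ {p : (Fin n → X) × Y | PrefixEq i w p.1 ∧ (p.2, p.1 i) ∈ O}}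
          = ∅ := by
        ext y; simp [h]
      simp [hset, hΦ, h, hmA]
  -- representation of the conditional marginal of A(X)
  have h_m : ∀ a : Y, μ.toOuterMeasure {p | p.2 = a ∧ PrefixEq i w p.1}
      = ∑' x, Φ x * A x a := by
    intro a
    rw [hμ, joint_om]
    refine tsum_congr fun x => ?_
    by_cases h : PrefixEq i w x
    · have hset : {y : Y | (x, y) ∈ {p : (Fin n → X) × Y | p.2 = a ∧ PrefixEq i w p.1}}
          = {a} := by
        ext y; simp [h]
      rw [hset, PMF.toOuterMeasure_apply_singleton]
      simp only [hΦ]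
      rw [if_pos h]
    · have hset : {y : Y | (x, y) ∈ {p : (Fin n → X) × Y | p.2 = a ∧ PrefixEq i w p.1}}
          = ∅ := by
        ext y; simp [h]
      simp [hset, hΦ, h]
  -- representation of gE
  have h_gE : ∀ O : Set (Y × X),
      (∑' q : Y × X,
          O.indicator (fun q => μ.toOuterMeasure {p | p.2 = q.1 ∧ PrefixEq i w p.1} * P q.2) q)
        = S (fun x z => mA x {y | (y, z) ∈ O}) := by
    intro O
    have step1 : ∀ q : Y × X,
        O.indicator (fun q => μ.toOuterMeasure {p | p.2 = q.1 ∧ PrefixEq i w p.1} * P q.2) q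
          = ∑' x, (if q ∈ O then Φ x * A x q.1 * P q.2 else 0) := by
      intro q
      rw [Set.indicator_apply]
      by_cases h : q ∈ O
      · rw [if_pos h, h_m, ← ENNReal.tsum_mul_right]
        exact tsum_congr fun x => by rw [if_pos h]
      · rw [if_neg h]
        symm
        simp [h]
    rw [tsum_congr step1, ENNReal.tsum_comm]
    simp only [hS]
    rw [ENNReal.tsum_prod']
    refine tsum_congr fun x => ?_
    have step2 : (∑' q : Y × X, if q ∈ O then Φ x * A x q.1 * P q.2 else 0)
        = ∑' z : X, ∑' a : Y, (if (a, z) ∈ O then Φ x * A x a * P z else 0) := by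
      rw [ENNReal.tsum_prod']
      exact ENNReal.tsum_comm
    rw [step2]
    refine tsum_congr fun z => ?_
    have step3 : ∀ a : Y, (if (a, z) ∈ O then Φ x * A x a * P z else 0)
        = (Φ x * P z) * ({y : Y | (y, z) ∈ O}.indicator (A x) a) := by
      intro a
      by_cases h : (a, z) ∈ O
      · rw [if_pos h, Set.indicator_of_mem (show a ∈ {y : Y | (y, z) ∈ O} from h)]
        ring
      · rw [if_neg h, Set.indicator_of_notMem (show a ∉ {y : Y | (y, z) ∈ O} from h), mul_zero]
    rw [tsum_congr step3, ENNReal.tsum_mul_left]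
    simp only [hmA]
    rw [PMF.toOuterMeasure_apply]
  -- termwise DP bound, in ℝ≥0∞
  have hdp : ∀ (x x' : Fin n → X), Neighbor x x' → ∀ T : Set Y,
      mA x T ≤ Eε * mA x' T + Dδ := by
    intro x x' hN T
    have h := hA x x' hN T
    have h1 : mA x T = ENNReal.ofReal (prob (A x) T) := by
      rw [prob, ENNReal.ofReal_toReal (om_ne_top _ _)]
    have h2 : mA x' T = ENNReal.ofReal (prob (A x') T) := by
      rw [prob, ENNReal.ofReal_toReal (om_ne_top _ _)]
    rw [h1, h2]
    calc ENNReal.ofReal (prob (A x) T)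
        ≤ ENNReal.ofReal (Real.exp ε * prob (A x') T + δ) := ENNReal.ofReal_le_ofReal h
      _ ≤ ENNReal.ofReal (Real.exp ε * prob (A x') T) + ENNReal.ofReal δ :=
          ENNReal.ofReal_add_le
      _ = Eε * ENNReal.ofReal (prob (A x') T) + Dδ := by
          rw [ENNReal.ofReal_mul (Real.exp_nonneg ε)]
  have hNb : ∀ (x : Fin n → X) (z : X), Neighbor x (Function.update x i z) :=
    fun x z => ⟨i, fun j hj => (Function.update_of_ne hj z x).symm⟩
  have hNb' : ∀ (x : Fin n → X) (z : X), Neighbor (Function.update x i z) x :=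
    fun x z => ⟨i, fun j hj => Function.update_of_ne hj z x⟩
  -- the involution step
  have h_invol : ∀ O : Set (Y × X),
      S (fun x z => mA (Function.update x i z) {y | (y, x i) ∈ O})
        = S (fun x z => mA x {y | (y, z) ∈ O}) := by
    intro O
    have hinv : Function.Involutive
        (fun p : (Fin n → X) × X => (Function.update p.1 i p.2, p.1 i)) := by
      intro p
      simp [Function.update_idem, Function.update_eq_self, Function.update_self]
    set e : ((Fin n → X) × X) ≃ ((Fin n → X) × X) := hinv.toPerm _ with he
    simp only [hS]
    rw [← Equiv.tsum_eq e (fun p => Φ p.1 * P p.2 * mA p.1 {y | (y, p.2) ∈ O})]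
    refine tsum_congr fun p => ?_
    obtain ⟨x, z⟩ := p
    have he' : e (x, z) = (Function.update x i z, x i) := rfl
    rw [he']
    have hw1 : Φ (Function.update x i z) * P (x i) = Φ x * P z := by
      simp only [hΦ]
      rw [if_congr (prefix_update i w x z) rfl rfl]
      by_cases h : PrefixEq i w x
      · rw [if_pos h, if_pos h, ← iid_update P i x z]
      · rw [if_neg h, if_neg h, zero_mul, zero_mul]
    simp only [Function.update_self]
    rw [hw1]
  -- the two ENNReal inequalities
  have ineq1E : ∀ O : Set (Y × X),
      S (fun x _ => mA x {y | (y, x i) ∈ O})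
        ≤ Eε * S (fun x z => mA x {y | (y, z) ∈ O}) + Dδ * sE := by
    intro O
    calc S (fun x _ => mA x {y | (y, x i) ∈ O})
        ≤ S (fun x z => Eε * mA (Function.update x i z) {y | (y, x i) ∈ O} + Dδ) :=
          hS_mono (fun x _ => mA x {y | (y, x i) ∈ O})
            (fun x z => Eε * mA (Function.update x i z) {y | (y, x i) ∈ O} + Dδ)
            fun x z => hdp x _ (hNb x z) _
      _ = Eε * S (fun x z => mA (Function.update x i z) {y | (y, x i) ∈ O}) + Dδ * sE :=
          hS_lin (fun x z => mA (Function.update x i z) {y | (y, x i) ∈ O})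
      _ = Eε * S (fun x z => mA x {y | (y, z) ∈ O}) + Dδ * sE := by rw [h_invol]
  have ineq2E : ∀ O : Set (Y × X),
      S (fun x z => mA x {y | (y, z) ∈ O})
        ≤ Eε * S (fun x _ => mA x {y | (y, x i) ∈ O}) + Dδ * sE := by
    intro O
    calc S (fun x z => mA x {y | (y, z) ∈ O})
        = S (fun x z => mA (Function.update x i z) {y | (y, x i) ∈ O}) := (h_invol O).symm
      _ ≤ S (fun x z => Eε * mA x {y | (y, x i) ∈ O} + Dδ) :=
          hS_mono (fun x z => mA (Function.update x i z) {y | (y, x i) ∈ O})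
            (fun x z => Eε * mA x {y | (y, x i) ∈ O} + Dδ)
            fun x z => hdp _ x (hNb' x z) _
      _ = Eε * S (fun x _ => mA x {y | (y, x i) ∈ O}) + Dδ * sE :=
          hS_lin (fun x _ => mA x {y | (y, x i) ∈ O})
  -- finiteness
  have hS_le_one : ∀ F : (Fin n → X) → X → ℝ≥0∞, (∀ x z, F x z ≤ 1) → S F ≤ 1 := by
    intro F hF
    calc S F ≤ S (fun _ _ => 1) := hS_mono _ _ hF
      _ = sE := hS_one
      _ ≤ 1 := om_le_one _ _
  have hfE_fin : ∀ O : Set (Y × X), S (fun x _ => mA x {y | (y, x i) ∈ O}) ≠ ⊤ :=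
    fun O => ne_top_of_le_ne_top ENNReal.one_ne_top
      (hS_le_one (fun x _ => mA x {y | (y, x i) ∈ O}) fun x z => om_le_one _ _)
  have hgE_fin : ∀ O : Set (Y × X), S (fun x z => mA x {y | (y, z) ∈ O}) ≠ ⊤ :=
    fun O => ne_top_of_le_ne_top ENNReal.one_ne_top
      (hS_le_one (fun x z => mA x {y | (y, z) ∈ O}) fun x z => om_le_one _ _)
  have hsE_fin : sE ≠ ⊤ := om_ne_top _ _
  -- relate the statement's functions to toReal of the ENNReal quantities
  have hF_eq : ∀ O : Set (Y × X),
      prob μ {p | PrefixEq i w p.1 ∧ (p.2, p.1 i) ∈ O} / prob μ {p | PrefixEq i w p.1}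
        = (S (fun x _ => mA x {y | (y, x i) ∈ O})).toReal / s := by
    intro O
    rw [prob, h_fE O]
    rfl
  have hG_eq : ∀ O : Set (Y × X),
      (∑' q : Y × X,
          Set.indicator O
            (fun q =>
              (prob μ {p | p.2 = q.1 ∧ PrefixEq i w p.1} / prob μ {p | PrefixEq i w p.1})
                * (P q.2).toReal) q)
        = (S (fun x z => mA x {y | (y, z) ∈ O})).toReal / s := by
    intro O
    rw [← h_gE O]
    have hterm : ∀ q : Y × X,
        Set.indicator O
            (fun q =>
              (prob μ {p | p.2 = q.1 ∧ PrefixEq i w p.1} / prob μ {p | PrefixEq i w p.1})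
                * (P q.2).toReal) q
          = (O.indicator
              (fun q => μ.toOuterMeasure {p | p.2 = q.1 ∧ PrefixEq i w p.1} * P q.2) q).toReal
              / s := by
      intro q
      rw [Set.indicator_apply, Set.indicator_apply]
      by_cases h : q ∈ O
      · rw [if_pos h, if_pos h, ENNReal.toReal_mul, prob, prob]
        field_simp
        exact mul_div_cancel_right₀ _ hsne
      · rw [if_neg h, if_neg h]
        simp
    rw [tsum_congr hterm, tsum_div_const]
    congr 1
    rw [ENNReal.tsum_toReal_eq]
    intro q
    by_cases h : q ∈ O
    · rw [Set.indicator_of_mem h]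
      exact ENNReal.mul_ne_top (om_ne_top _ _) (PMF.apply_ne_top _ _)
    · rw [Set.indicator_of_notMem h]
      exact ENNReal.zero_ne_top
  -- convert an ENNReal inequality to the real one
  have key : ∀ a b : ℝ≥0∞, a ≠ ⊤ → b ≠ ⊤ → a ≤ Eε * b + Dδ * sE →
      a.toReal / s ≤ Real.exp ε * (b.toReal / s) + δ := by
    intro a b ha hb h
    have hrhs_fin : Eε * b + Dδ * sE ≠ ⊤ := by
      apply ENNReal.add_ne_top.2
      exact ⟨ENNReal.mul_ne_top ENNReal.ofReal_ne_top hb,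
        ENNReal.mul_ne_top ENNReal.ofReal_ne_top hsE_fin⟩
    have hr : a.toReal ≤ (Eε * b + Dδ * sE).toReal := ENNReal.toReal_mono hrhs_fin h
    have h2 : (Eε * b + Dδ * sE).toReal = Real.exp ε * b.toReal + δ * sE.toReal := by
      simp only [hEε, hDδ]
      rw [ENNReal.toReal_add (ENNReal.mul_ne_top ENNReal.ofReal_ne_top hb)
            (ENNReal.mul_ne_top ENNReal.ofReal_ne_top hsE_fin),
          ENNReal.toReal_mul, ENNReal.toReal_mul,
          ENNReal.toReal_ofReal (Real.exp_nonneg ε), ENNReal.toReal_ofReal hδ0]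
    rw [h2] at hr
    rw [div_le_iff₀ hspos]
    calc a.toReal ≤ Real.exp ε * b.toReal + δ * sE.toReal := hr
      _ = (Real.exp ε * (b.toReal / s) + δ) * s := by
          field_simp
          rfl
  intro O
  dsimp only
  constructor
  · rw [hF_eq O, hG_eq O]
    exact key _ _ (hfE_fin O) (hgE_fin O) (ineq1E O)
  · rw [hF_eq O, hG_eq O]
    exact key _ _ (hgE_fin O) (hfE_fin O) (ineq2E O)
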